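/- Let X be a finite pure simplicial complex of dimension at least 2, let G be a group acting faithfully on a finite nonempty set S, let φ ∈ C¹(X;G), and let f:Y_φ→X be the projection map. Then m_f(Y_φ) = 0 if and only if φ ∈ Z¹(X;G). -/
import Mathlib


open Finset

variable {V : Type*} [DecidableEq V]

/-- A finite abstract simplicial complex on vertex type `V`. -/
structure SComplex (V : Type*) [DecidableEq V] where
  faces : Finset (Finset V)
  nonempty_of_mem : ∀ σ ∈ faces, σ.Nonempty
  down_closed : ∀ σ ∈ faces, ∀ τ ⊆ σ, τ.Nonempty → τ ∈ faces

namespace SComplex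

/-- The set `X(k)` of `k`-dimensional simplices (cardinality `k+1`). -/
def simps (X : SComplex V) (k : ℕ) : Finset (Finset V) :=
  X.faces.filter fun σ => σ.card = k + 1

/-- The number of vertices of a top-dimensional face. -/
def rank (X : SComplex V) : ℕ := X.faces.sup Finset.card

/-- The weight `c_X(σ)`. -/
noncomputable def weight (X : SComplex V) (σ : Finset V) : ℝ :=
  (((X.simps (X.rank - 1)).filter fun τ => σ ⊆ τ).card : ℝ) /
    ((X.rank.choose σ.card) * ((X.simps (X.rank - 1)).card))

/-- `X` is pure of dimension `n-1` : every face is contained in a face with `n` vertices. -/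
def IsPureOfRank (X : SComplex V) (n : ℕ) : Prop :=
  X.faces.Nonempty ∧ ∀ σ ∈ X.faces, ∃ τ ∈ X.faces, σ ⊆ τ ∧ τ.card = n

/-- The link `lk(X,σ)`. -/
def lk (X : SComplex V) (σ : Finset V) : SComplex V where
  faces := X.faces.filter fun η => η ∪ σ ∈ X.faces ∧ Disjoint η σ
  nonempty_of_mem := fun η hη => X.nonempty_of_mem η (mem_filter.mp hη).1
  down_closed := by
    intro η hη τ hτη hτ
    rw [mem_filter] at hη ⊢
    refine ⟨X.down_closed η hη.1 τ hτη hτ,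
      X.down_closed (η ∪ σ) hη.2.1 (τ ∪ σ) (union_subset_union_left hτη) ?_,
      hη.2.2.mono_left hτη⟩
    exact hτ.mono subset_union_left

/-- The star `st(X,σ)`. -/
def star (X : SComplex V) (σ : Finset V) : Finset (Finset V) :=
  X.faces.filter fun τ => τ ∪ σ ∈ X.faces

/-- The vertices of `X`. -/
def verts (X : SComplex V) [Fintype V] : Finset V :=
  Finset.univ.filter fun v => ({v} : Finset V) ∈ X.faces

end SComplex
section Cochains

variable {G : Type*} [Group G]

/-- `φ ∈ C¹(X;G)`: an antisymmetric `G`-valued function on ordered pairs. -/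
def IsCochain (G : Type*) [Group G] (φ : V → V → G) : Prop :=
  ∀ u v : V, φ u v = (φ v u)⁻¹

/-- The coboundary `d₁φ(u,v,w) = φ(u,v)φ(v,w)φ(w,u)`. -/
def d1 (φ : V → V → G) (u v w : V) : G := φ u v * φ v w * φ w u

/-- `φ ∈ Z¹(X;G)`: a cochain all of whose triangle equations hold. -/
def IsCocycle (X : SComplex V) (φ : V → V → G) : Prop :=
  IsCochain G φ ∧ ∀ u v w : V, ({u, v, w} : Finset V) ∈ X.simps 2 → d1 φ u v w = 1

open Classical in
/-- The norm `‖φ‖`: total weight of the support of `φ`. -/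
noncomputable def norm1 (X : SComplex V) (φ : V → V → G) : ℝ :=
  ∑ e ∈ (X.simps 1).filter (fun e => ∃ u v : V, e = {u, v} ∧ φ u v ≠ 1), X.weight e

open Classical in
/-- The norm `‖d₁φ‖`: total weight of the 2-simplices whose equation is violated. -/
noncomputable def normD1 (X : SComplex V) (φ : V → V → G) : ℝ :=
  ∑ τ ∈ (X.simps 2).filter (fun τ => ∃ u v w : V, τ = {u, v, w} ∧ d1 φ u v w ≠ 1), X.weight τ

/-- `dist(φ,ψ) = ‖φψ⁻¹‖`. -/
noncomputable def dist1 (X : SComplex V) (φ ψ : V → V → G) : ℝ :=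
  norm1 X (fun u v => φ u v * (ψ u v)⁻¹)

/-- The cosystolic norm `‖φ‖_csy`: the distance from `φ` to `Z¹(X;G)`. -/
noncomputable def csyNorm (X : SComplex V) (φ : V → V → G) : ℝ :=
  sInf {d : ℝ | ∃ ψ : V → V → G, IsCocycle X ψ ∧ d = dist1 X φ ψ}

/-- The cosystolic expansion `h₁(X;G)`. -/
noncomputable def h1 (X : SComplex V) (G : Type*) [Group G] : ℝ :=
  sInf {r : ℝ | ∃ φ : V → V → G, IsCochain G φ ∧ ¬ IsCocycle X φ ∧
    r = normD1 X φ / csyNorm X φ}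

end Cochains

section Fix

variable (G : Type*) [Group G] (S : Type*) [Fintype S] [MulAction G S]

open Classical in
/-- `fix(g) = |{s ∈ S : g•s = s}|`. -/
noncomputable def fixCard (g : G) : ℕ :=
  (Finset.univ.filter fun s : S => g • s = s).card

/-- `Fix_G(S) = max_{g ≠ 1} fix(g)`. -/
noncomputable def FixG : ℕ :=
  sSup {k : ℕ | ∃ g : G, g ≠ 1 ∧ fixCard G S g = k}

end Fix
section Ycomplex

variable {G : Type*} [Group G] {S : Type*} [Fintype S] [DecidableEq S] [MulAction G S]
variable [Fintype V]

open Classical in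
/-- The complex `Y_φ` associated to a cochain `φ`, together with the projection
`Prod.fst : Y_φ → X`. -/
noncomputable def Ycomplex (X : SComplex V) (φ : V → V → G) (S : Type*)
    [Fintype S] [DecidableEq S] [MulAction G S] : SComplex (V × S) where
  faces := Finset.univ.filter fun σ : Finset (V × S) =>
    σ.image Prod.fst ∈ X.faces ∧ (σ.image Prod.fst).card = σ.card ∧
    ∀ p ∈ σ, ∀ q ∈ σ, p.1 ≠ q.1 → p.2 = φ p.1 q.1 • q.2
  nonempty_of_mem := by
    intro σ hσ
    rw [Finset.mem_filter] at hσ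
    exact Finset.image_nonempty.mp (X.nonempty_of_mem _ hσ.2.1)
  down_closed := by
    intro σ hσ τ hτσ hτ
    rw [Finset.mem_filter] at hσ ⊢
    obtain ⟨-, h1, h2, h3⟩ := hσ
    refine ⟨Finset.mem_univ _,
      X.down_closed _ h1 _ (Finset.image_subset_image hτσ) (Finset.image_nonempty.mpr hτ),
      ?_, fun p hp q hq => h3 p (hτσ hp) q (hτσ hq)⟩
    exact Finset.card_image_iff.mpr ((Finset.card_image_iff.mp h2).mono hτσ)

end Ycomplex

section Deficiency

variable {W : Type*} [DecidableEq W] [Fintype W] [Fintype V]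

open Classical in
/-- `D_f(ut)`: the edges in the link of `f(ut)` that are not covered by the image of the
link of `ut`. -/
noncomputable def Dset (Y : SComplex W) (X : SComplex V) (f : W → V) (ut : W) :
    Finset (Finset V) :=
  ((X.lk {f ut}).simps 1).filter fun e => ¬ ∃ η ∈ (Y.lk {ut}).faces, η.image f = e

/-- The local deficiency `μ_f(ut)`. -/
noncomputable def locDef (Y : SComplex W) (X : SComplex V) (f : W → V) (ut : W) : ℝ :=
  ∑ e ∈ Dset Y X f ut, (X.lk {f ut}).weight e

open Classical in
/-- The deficiency `m_f(Y)` of a map `f : Y → X`. -/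
noncomputable def deficiency (Y : SComplex W) (X : SComplex V) (f : W → V) : ℝ :=
  ∑ u ∈ X.verts, (X.weight {u} / ((Y.verts.filter fun w => f w = u).card : ℝ)) *
    ∑ ut ∈ Y.verts.filter (fun w => f w = u), locDef Y X f ut

end Deficiency
section MapOver

variable [Fintype V]

/-- An element of `M(X;G,S)`: a surjective simplicial `|S|`-to-`1` map onto `X` whose
vertex fibers are identified with `S` and whose edge fibers are matchings given by the
action of elements of `G`. -/
structure MapOver (X : SComplex V) (G : Type*) (S : Type*) [Group G] [Fintype S]
    [DecidableEq S] [MulAction G S] [Fintype V] where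
  Y : SComplex (V × S)
  simplicial : ∀ τ ∈ Y.faces, τ.image Prod.fst ∈ X.faces
  injOnFaces : ∀ τ ∈ Y.faces, (τ.image Prod.fst).card = τ.card
  surj : ∀ σ ∈ X.faces, ∃ τ ∈ Y.faces, τ.image Prod.fst = σ
  fiber : ∀ p : V × S, ({p} : Finset (V × S)) ∈ Y.faces ↔ ({p.1} : Finset V) ∈ X.faces
  edges : ∀ u v : V, ({u, v} : Finset V) ∈ X.simps 1 → ∃ g : G,
    ∀ s t : S, (({(u, s), (v, t)} : Finset (V × S)) ∈ Y.faces ↔ s = g • t)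

variable {G : Type*} [Group G] {S : Type*} [Fintype S] [DecidableEq S] [MulAction G S]

open Classical in
/-- The set of edges of `Y` lying over a given edge of the base. -/
noncomputable def edgeFiber (Y : SComplex (V × S)) (e : Finset V) :
    Finset (Finset (V × S)) :=
  (Y.simps 1).filter fun e' => e'.image Prod.fst = e

open Classical in
/-- The distance between two elements of `M(X;G,S)`: the weight of the set of edges of
`X` over which the two edge fibers differ. -/
noncomputable def mdist (X : SComplex V) (M₁ M₂ : MapOver X G S) : ℝ :=
  ∑ e ∈ (X.simps 1).filter (fun e => edgeFiber M₁.Y e ≠ edgeFiber M₂.Y e), X.weight e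

/-- The distance from an element of `M(X;G,S)` to the set `M₀(X;G,S)` of genuine covers. -/
noncomputable def distToCovers (X : SComplex V) (M : MapOver X G S) : ℝ :=
  sInf {d : ℝ | ∃ M' : MapOver X G S, deficiency M'.Y X Prod.fst = 0 ∧ d = mdist X M M'}

/-- The `(G,S)`-cover-stability `c(X;G,S)`. -/
noncomputable def coverStability (X : SComplex V) (G : Type*) (S : Type*) [Group G]
    [Fintype S] [DecidableEq S] [MulAction G S] : ℝ :=
  sInf {r : ℝ | ∃ M : MapOver X G S, deficiency M.Y X Prod.fst ≠ 0 ∧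
    r = deficiency M.Y X Prod.fst / distToCovers X M}

end MapOver
section Paths

/-- A (possibly closed) edge path in a complex: consecutive vertices span edges. -/
def IsEdgePath (K : SComplex V) (p : List V) : Prop :=
  (∀ v ∈ p, ({v} : Finset V) ∈ K.faces) ∧
    p.Chain' fun u v => ({u, v} : Finset V) ∈ K.faces

/-- Combinatorial homotopy of edge paths, generated by erasing repetitions and by
collapsing across simplices. -/
inductive Homotopic (K : SComplex V) : List V → List V → Prop
  | refl (p : List V) : Homotopic K p p
  | symm {p q : List V} : Homotopic K p q → Homotopic K q p
  | trans {p q r : List V} : Homotopic K p q → Homotopic K q r → Homotopic K p r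
  | collapse (p q : List V) (a b c : V) (h : ({a, b, c} : Finset V) ∈ K.faces) :
      Homotopic K (p ++ a :: b :: c :: q) (p ++ a :: c :: q)
  | dedup (p q : List V) (a : V) : Homotopic K (p ++ a :: a :: q) (p ++ a :: q)

/-- `K` is connected: any two vertices are joined by an edge path. -/
def SComplexConnected (K : SComplex V) : Prop :=
  ∀ u v : V, ({u} : Finset V) ∈ K.faces → ({v} : Finset V) ∈ K.faces →
    ∃ p : List V, IsEdgePath K p ∧ p.head? = some u ∧ p.getLast? = some v

/-- `K` is simply connected: connected, and every closed edge path is null-homotopic. -/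
def SimplyConnected (K : SComplex V) : Prop :=
  SComplexConnected K ∧
    ∀ (p : List V) (a : V), IsEdgePath K p → p.head? = some a → p.getLast? = some a →
      Homotopic K p [a]

end Paths

section OrderComplex

open Classical in
/-- The order complex of `L ∖ {⊥, ⊤}`: simplices are the nonempty chains avoiding
`⊥` and `⊤`. -/
noncomputable def orderComplex (L : Type*) [Lattice L] [BoundedOrder L] [Fintype L]
    [DecidableEq L] : SComplex L where
  faces := Finset.univ.filter fun σ : Finset L =>
    σ.Nonempty ∧ (∀ x ∈ σ, x ≠ ⊥ ∧ x ≠ ⊤) ∧ ∀ x ∈ σ, ∀ y ∈ σ, x ≤ y ∨ y ≤ x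
  nonempty_of_mem := fun σ hσ => (Finset.mem_filter.mp hσ).2.1
  down_closed := by
    intro σ hσ τ hτσ hτ
    rw [Finset.mem_filter] at hσ ⊢
    exact ⟨Finset.mem_univ _, hτ, fun x hx => hσ.2.2.1 x (hτσ hx),
      fun x hx y hy => hσ.2.2.2 x (hτσ hx) y (hτσ hy)⟩

end OrderComplex
section Building

variable (F : Type*) [Field F] [Fintype F]

noncomputable instance : Fintype (Submodule F (Fin 4 → F)) := by
  have : Finite (Submodule F (Fin 4 → F)) :=
    Finite.of_injective (fun N => (N : Set (Fin 4 → F))) SetLike.coe_injective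
  exact Fintype.ofFinite _

noncomputable instance : DecidableEq (Submodule F (Fin 4 → F)) := Classical.decEq _

/-- The spherical building `A₃(F_q)`: the order complex of the poset of nontrivial proper
linear subspaces of `F_q⁴`. -/
noncomputable def A3 : SComplex (Submodule F (Fin 4 → F)) :=
  orderComplex (Submodule F (Fin 4 → F))

end Building
section FixEdge

variable {G : Type*} [Group G]

open Classical in
/-- The value `fix(d₁φ(u,v₁,v₂))` for an unordered edge `e = {v₁,v₂}` of the link of `u`
(well defined for cochains, since `fix` is invariant under inversion and conjugation). -/
noncomputable def fixEdge (S : Type*) [Fintype S] [MulAction G S] (φ : V → V → G)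
    (u : V) (e : Finset V) : ℕ :=
  sSup {k : ℕ | ∃ v₁ ∈ e, ∃ v₂ ∈ e, v₁ ≠ v₂ ∧ k = fixCard G S (d1 φ u v₁ v₂)}

end FixEdge
section Aux

variable {V : Type*} [DecidableEq V]

lemma rank_eq_of_pure {X : SComplex V} {n : ℕ} (h : X.IsPureOfRank n) : X.rank = n := by
  obtain ⟨⟨σ₀, hσ₀⟩, hp⟩ := h
  apply le_antisymm
  · apply Finset.sup_le
    intro σ hσ
    obtain ⟨τ, hτ, hsub, hcard⟩ := hp σ hσ
    exact hcard ▸ Finset.card_le_card hsub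
  · obtain ⟨τ, hτ, _, hcard⟩ := hp σ₀ hσ₀
    exact hcard ▸ Finset.le_sup hτ

lemma weight_nonneg (X : SComplex V) (σ : Finset V) : 0 ≤ X.weight σ := by
  apply div_nonneg <;> positivity

lemma weight_pos {X : SComplex V} {n : ℕ} (h : X.IsPureOfRank n) (hn : 1 ≤ n)
    {σ : Finset V} (hσ : σ ∈ X.faces) : 0 < X.weight σ := by
  obtain ⟨τ, hτ, hsub, hcard⟩ := h.2 σ hσ
  have hrank : X.rank = n := rank_eq_of_pure h
  have hτs : τ ∈ X.simps (X.rank - 1) := by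
    simp only [SComplex.simps, Finset.mem_filter]
    exact ⟨hτ, by omega⟩
  have hnum : 0 < (((X.simps (X.rank - 1)).filter fun τ => σ ⊆ τ).card : ℝ) := by
    have : τ ∈ (X.simps (X.rank - 1)).filter fun τ => σ ⊆ τ :=
      Finset.mem_filter.mpr ⟨hτs, hsub⟩
    exact_mod_cast Finset.card_pos.mpr ⟨τ, this⟩
  have hc : 0 < X.rank.choose σ.card := by
    apply Nat.choose_pos
    rw [hrank]
    exact hcard ▸ Finset.card_le_card hsub
  have hden : (0:ℝ) < (X.rank.choose σ.card) * ((X.simps (X.rank - 1)).card) := by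
    have : 0 < ((X.simps (X.rank - 1)).card : ℝ) :=
      by exact_mod_cast Finset.card_pos.mpr ⟨τ, hτs⟩
    positivity
  exact div_pos hnum hden

lemma lk_pure {X : SComplex V} {n : ℕ} (h : X.IsPureOfRank n) (hn : 1 ≤ n) {u : V}
    (hne : (X.lk {u}).faces.Nonempty) : (X.lk {u}).IsPureOfRank (n - 1) := by
  refine ⟨hne, ?_⟩
  intro η hη
  rw [SComplex.lk, Finset.mem_filter] at hη
  obtain ⟨hη1, hη2, hη3⟩ := hη
  obtain ⟨τ, hτ, hsub, hcard⟩ := h.2 _ hη2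
  have huτ : u ∈ τ := hsub (by simp)
  have hsub' : η ⊆ τ \ {u} := by
    intro x hx
    refine Finset.mem_sdiff.mpr ⟨hsub (Finset.mem_union_left _ hx), ?_⟩
    have := Finset.disjoint_left.mp hη3 hx
    simpa using this
  have hne' : (τ \ {u}).Nonempty := (X.nonempty_of_mem η hη1).mono hsub'
  have hu : τ \ {u} ∪ {u} = τ := by
    rw [Finset.sdiff_union_self_eq_union, Finset.union_eq_left]
    exact Finset.singleton_subset_iff.mpr huτ
  have hτu : τ \ {u} ∈ (X.lk {u}).faces := by
    rw [SComplex.lk, Finset.mem_filter]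
    refine ⟨X.down_closed τ hτ _ Finset.sdiff_subset hne', by rw [hu]; exact hτ,
      Finset.sdiff_disjoint⟩
  refine ⟨τ \ {u}, hτu, hsub', ?_⟩
  rw [Finset.card_sdiff_of_subset (Finset.singleton_subset_iff.mpr huτ)]
  simp [hcard]

variable {G : Type*} [Group G] {S : Type*} [Fintype S] [DecidableEq S] [MulAction G S]
variable [Fintype V]

lemma mem_Ycomplex_faces {X : SComplex V} {φ : V → V → G} {σ : Finset (V × S)} :
    σ ∈ (Ycomplex X φ S).faces ↔ σ.image Prod.fst ∈ X.faces ∧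
      (σ.image Prod.fst).card = σ.card ∧
      ∀ p ∈ σ, ∀ q ∈ σ, p.1 ≠ q.1 → p.2 = φ p.1 q.1 • q.2 := by
  classical
  simp only [Ycomplex, Finset.mem_filter, Finset.mem_univ, true_and]

lemma singleton_mem_Ycomplex {X : SComplex V} {φ : V → V → G} {u : V} {s : S}
    (hu : ({u} : Finset V) ∈ X.faces) :
    ({(u, s)} : Finset (V × S)) ∈ (Ycomplex X φ S).faces := by
  rw [mem_Ycomplex_faces]
  refine ⟨by simpa using hu, by simp, ?_⟩
  intro p hp q hq hpq
  simp only [Finset.mem_singleton] at hp hq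
  subst hp; subst hq; exact absurd rfl hpq

lemma ne_of_card_three' {u v w : V} (h : ({u, v, w} : Finset V).card = 3) :
    u ≠ v ∧ u ≠ w ∧ v ≠ w := by
  have key : ∀ (a b : V) (s : Finset V), s ⊆ {a, b} → s.card ≠ 3 := by
    intro a b s hs h3
    have h1 := Finset.card_le_card hs
    have h2 : ({a, b} : Finset V).card ≤ 2 :=
      le_trans (Finset.card_insert_le _ _) (by simp)
    omega
  refine ⟨?_, ?_, ?_⟩ <;> rintro rfl
  · exact key u w _ (by intro x hx; simp at hx ⊢; tauto) h
  · exact key u v _ (by intro x hx; simp at hx ⊢; tauto) h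
  · exact key u v _ (by intro x hx; simp at hx ⊢; tauto) h

lemma triangle_mem_Ycomplex {X : SComplex V} {φ : V → V → G} (hφ : IsCochain G φ)
    {u v w : V} (huv : u ≠ v) (huw : u ≠ w) (hvw : v ≠ w)
    (hface : ({u, v, w} : Finset V) ∈ X.faces) (hd : d1 φ u v w = 1) (s : S) :
    ({(u, s), (v, φ v u • s), (w, φ w u • s)} : Finset (V × S)) ∈
      (Ycomplex X φ S).faces := by
  have hbc : φ v w * φ w u = (φ u v)⁻¹ := by
    calc φ v w * φ w u = (φ u v)⁻¹ * (φ u v * φ v w * φ w u) := by group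
    _ = (φ u v)⁻¹ := by rw [show φ u v * φ v w * φ w u = 1 from hd, mul_one]
  have hab : φ u v * φ v w = (φ w u)⁻¹ := by
    calc φ u v * φ v w = (φ u v * φ v w * φ w u) * (φ w u)⁻¹ := by group
    _ = (φ w u)⁻¹ := by rw [show φ u v * φ v w * φ w u = 1 from hd, one_mul]
  have himg : ({(u, s), (v, φ v u • s), (w, φ w u • s)} : Finset (V × S)).image
      Prod.fst = {u, v, w} := by
    simp [Finset.image_insert]
  rw [mem_Ycomplex_faces, himg]
  refine ⟨hface, ?_, ?_⟩
  · have h1 : ({u, v, w} : Finset V).card = 3 := by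
      rw [Finset.card_insert_of_notMem (by simp [huv, huw]), Finset.card_pair hvw]
    have h2 : ({(u, s), (v, φ v u • s), (w, φ w u • s)} : Finset (V × S)).card = 3 := by
      rw [Finset.card_insert_of_notMem, Finset.card_pair]
      · exact fun h => hvw (congrArg Prod.fst h)
      · simp only [Finset.mem_insert, Finset.mem_singleton]
        push_neg
        exact ⟨fun h => huv (congrArg Prod.fst h), fun h => huw (congrArg Prod.fst h)⟩
    rw [h1, h2]
  · intro p hp q hq hpq
    simp only [Finset.mem_insert, Finset.mem_singleton] at hp hq
    rcases hp with rfl | rfl | rfl <;> rcases hq with rfl | rfl | rfl <;>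
        simp only [] at hpq ⊢ <;>
      first
        | exact absurd rfl hpq
        | rfl
        | rw [hφ u v, inv_smul_smul]
        | rw [hφ u w, inv_smul_smul]
        | rw [smul_smul, hbc, ← hφ v u]
        | rw [smul_smul, hφ w v, hφ v u, ← mul_inv_rev, hab, inv_inv]

end Aux

/-- for a faithful action, `Y_φ` has zero deficiency iff `φ` is a
cocycle. -/
theorem deficiency_eq_zero_iff
    {V : Type*} [Fintype V] [DecidableEq V]
    {G : Type*} [Group G] {S : Type*} [Fintype S] [DecidableEq S] [Nonempty S]
    [MulAction G S]
    (X : SComplex V) (n : ℕ) (hn : 3 ≤ n) (hpure : X.IsPureOfRank n)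
    (hfaithful : ∀ g : G, g ≠ 1 → ∃ s : S, g • s ≠ s)
    (φ : V → V → G) (hφ : IsCochain G φ) :
    deficiency (Ycomplex X φ S) X Prod.fst = 0 ↔ IsCocycle X φ := by
  classical
  set Y := Ycomplex X φ S with hYdef
  have hwpos : ∀ {σ : Finset V}, σ ∈ X.faces → 0 < X.weight σ :=
    fun hσ => weight_pos hpure (by omega) hσ
  have hlkw : ∀ (u : V) (e : Finset V), e ∈ (X.lk {u}).simps 1 →
      0 < (X.lk {u}).weight e := by
    intro u e he
    have heF : e ∈ (X.lk {u}).faces := (Finset.mem_filter.mp he).1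
    exact weight_pos (lk_pure hpure (by omega) ⟨e, heF⟩) (by omega) heF
  have hlocnn : ∀ ut : V × S, 0 ≤ locDef Y X Prod.fst ut := fun ut =>
    Finset.sum_nonneg fun e _ => weight_nonneg _ _
  constructor
  · intro h0
    refine ⟨hφ, ?_⟩
    intro u v w htri
    by_contra hd1
    obtain ⟨s, hs⟩ := hfaithful _ hd1
    rw [SComplex.simps, Finset.mem_filter] at htri
    obtain ⟨hface, hcard⟩ := htri
    obtain ⟨huv, huw, hvw⟩ := ne_of_card_three' hcard
    have hu1 : ({u} : Finset V) ∈ X.faces :=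
      X.down_closed _ hface {u} (by intro x hx; simp at hx; simp [hx]) ⟨u, by simp⟩
    have hvwf : ({v, w} : Finset V) ∈ X.faces :=
      X.down_closed _ hface _ (by intro x hx; simp at hx ⊢; tauto) ⟨v, by simp⟩
    have hunion : ({v, w} : Finset V) ∪ {u} = {u, v, w} := by
      rw [Finset.union_comm, ← Finset.insert_eq]
    have he : ({v, w} : Finset V) ∈ (X.lk {u}).simps 1 := by
      rw [SComplex.simps, Finset.mem_filter, SComplex.lk, Finset.mem_filter]
      refine ⟨⟨hvwf, by rw [hunion]; exact hface, ?_⟩, Finset.card_pair hvw⟩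
      rw [Finset.disjoint_singleton_right]
      simp only [Finset.mem_insert, Finset.mem_singleton]
      push_neg
      exact ⟨huv, huw⟩
    have hD : ({v, w} : Finset V) ∈ Dset Y X Prod.fst (u, s) := by
      rw [Dset, Finset.mem_filter]
      refine ⟨he, ?_⟩
      rintro ⟨η, hη, hηimg⟩
      rw [SComplex.lk, Finset.mem_filter] at hη
      obtain ⟨hη1, hη2, hη3⟩ := hη
      have hcomp := (mem_Ycomplex_faces.mp hη2).2.2
      have hvmem : v ∈ η.image Prod.fst := by rw [hηimg]; simp
      have hwmem : w ∈ η.image Prod.fst := by rw [hηimg]; simp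
      obtain ⟨p, hp, hpv⟩ := Finset.mem_image.mp hvmem
      obtain ⟨q, hq, hqw⟩ := Finset.mem_image.mp hwmem
      have hpσ : p ∈ η ∪ {(u, s)} := Finset.mem_union_left _ hp
      have hqσ : q ∈ η ∪ {(u, s)} := Finset.mem_union_left _ hq
      have huσ : (u, s) ∈ η ∪ {(u, s)} := Finset.mem_union_right _ (by simp)
      have h1 := hcomp p hpσ (u, s) huσ (by rw [hpv]; exact fun h => huv h.symm)
      have h2 := hcomp q hqσ (u, s) huσ (by rw [hqw]; exact fun h => huw h.symm)
      have h3 := hcomp p hpσ q hqσ (by rw [hpv, hqw]; exact hvw)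
      rw [hpv] at h1 h3
      rw [hqw] at h2 h3
      apply hs
      rw [h1, h2] at h3
      have hcalc : d1 φ u v w • s = φ u v • (φ v w • (φ w u • s)) := by
        rw [d1, mul_smul, mul_smul]
      rw [hcalc, ← h3, hφ u v, inv_smul_smul]
    have hloc : 0 < locDef Y X Prod.fst (u, s) := by
      apply Finset.sum_pos
      · intro e heD
        exact hlkw u e (Finset.mem_filter.mp heD).1
      · exact ⟨_, hD⟩
    have husV : (u, s) ∈ Y.verts.filter (fun p => Prod.fst p = u) := by
      rw [Finset.mem_filter]
      refine ⟨?_, rfl⟩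
      rw [SComplex.verts, Finset.mem_filter]
      exact ⟨Finset.mem_univ _, singleton_mem_Ycomplex hu1⟩
    have hcardpos : 0 < (((Y.verts.filter fun p => Prod.fst p = u)).card : ℝ) := by
      exact_mod_cast Finset.card_pos.mpr ⟨_, husV⟩
    have hterm : 0 < (X.weight {u} /
        (((Y.verts.filter fun p => Prod.fst p = u)).card : ℝ)) *
        ∑ ut ∈ Y.verts.filter (fun p => Prod.fst p = u), locDef Y X Prod.fst ut := by
      apply mul_pos (div_pos (hwpos hu1) hcardpos)
      exact Finset.sum_pos' (fun ut _ => hlocnn ut) ⟨(u, s), husV, hloc⟩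
    have huV : u ∈ X.verts := by
      rw [SComplex.verts, Finset.mem_filter]; exact ⟨Finset.mem_univ _, hu1⟩
    have hpos : 0 < deficiency Y X Prod.fst := by
      rw [deficiency]
      refine Finset.sum_pos' ?_ ⟨u, huV, hterm⟩
      intro u' _
      apply mul_nonneg (div_nonneg (weight_nonneg _ _) (by positivity))
      exact Finset.sum_nonneg fun ut _ => hlocnn ut
    linarith
  · intro hcoc
    rw [deficiency]
    apply Finset.sum_eq_zero
    intro u huV
    rw [mul_eq_zero]
    right
    apply Finset.sum_eq_zero
    intro ut hut
    rw [Finset.mem_filter] at hut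
    obtain ⟨hutY, hfst⟩ := hut
    rw [SComplex.verts, Finset.mem_filter] at hutY
    have hsing : ({ut} : Finset (V × S)) ∈ Y.faces := hutY.2
    obtain ⟨u₀, s⟩ := ut
    have hu₀ : ({u₀} : Finset V) ∈ X.faces := by
      have := (mem_Ycomplex_faces.mp hsing).1
      simpa using this
    have hDempty : Dset Y X Prod.fst (u₀, s) = ∅ := by
      rw [Dset, Finset.filter_eq_empty_iff]
      intro e he
      rw [not_not]
      rw [SComplex.simps, Finset.mem_filter] at he
      obtain ⟨helk, hecard⟩ := he
      rw [SComplex.lk, Finset.mem_filter] at helk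
      obtain ⟨heF, heU, heDisj⟩ := helk
      obtain ⟨v, w, hvw, rfl⟩ := Finset.card_eq_two.mp hecard
      have hunion : ({v, w} : Finset V) ∪ {u₀} = {u₀, v, w} := by
        rw [Finset.union_comm, ← Finset.insert_eq]
      have hne_u : u₀ ∉ ({v, w} : Finset V) := by
        rw [Finset.disjoint_singleton_right] at heDisj; exact heDisj
      have huv : u₀ ≠ v := by rintro rfl; exact hne_u (by simp)
      have huw : u₀ ≠ w := by rintro rfl; exact hne_u (by simp)
      have hface : ({u₀, v, w} : Finset V) ∈ X.faces := by
        rw [← hunion]; exact heU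
      have hcard3 : ({u₀, v, w} : Finset V).card = 3 := by
        rw [Finset.card_insert_of_notMem hne_u, Finset.card_pair hvw]
      have hd1 : d1 φ u₀ v w = 1 := hcoc.2 u₀ v w
        (by rw [SComplex.simps, Finset.mem_filter]; exact ⟨hface, hcard3⟩)
      have htri := triangle_mem_Ycomplex (S := S) hφ huv huw hvw hface hd1 s
      refine ⟨{(v, φ v u₀ • s), (w, φ w u₀ • s)}, ?_, ?_⟩
      · have hησ : ({(v, φ v u₀ • s), (w, φ w u₀ • s)} : Finset (V × S)) ∪ {(u₀, s)} =
            {(u₀, s), (v, φ v u₀ • s), (w, φ w u₀ • s)} := by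
          rw [Finset.union_comm, ← Finset.insert_eq]
        have hσY : ({(v, φ v u₀ • s), (w, φ w u₀ • s)} : Finset (V × S)) ∪ {(u₀, s)} ∈
            Y.faces := by rw [hησ]; exact htri
        rw [SComplex.lk, Finset.mem_filter]
        refine ⟨Y.down_closed _ hσY _ Finset.subset_union_left ⟨(v, φ v u₀ • s), by simp⟩, hσY, ?_⟩
        rw [Finset.disjoint_singleton_right]
        simp only [Finset.mem_insert, Finset.mem_singleton, Prod.mk.injEq, not_or]
        exact ⟨fun h => huv h.1, fun h => huw h.1⟩
      · simp [Finset.image_insert]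
    rw [locDef, hDempty, Finset.sum_empty]
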